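/- Let 1 < p < ∞ and 1 < r ≤ p. For any two positive differentiable functions u, v on an open set Ω ⊂ ℝ^N, the pointwise inequality [∇u]^{p-1} · ∇( (u^r - v^r)/u^{r-1} ) + [∇v]^{p-1} · ∇( (v^r - u^r)/v^{r-1} ) ≥ 0 holds for all x ∈ Ω, where [ξ]^{p-1} := |ξ|^{p-2} ξ for vectors ξ. -/

import Mathlib

open MeasureTheory
open scoped RealInnerProductSpace

noncomputable section

abbrev Euc (N : ℕ) := EuclideanSpace ℝ (Fin N)

/-- For a vector `ξ`, `[ξ]^{p-1} := |ξ|^{p-2} ξ`. -/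
def vecPow {N : ℕ} (p : ℝ) (ξ : Euc N) : Euc N := ‖ξ‖ ^ (p - 2) • ξ

/-- Three-term Young-type inequality used in the Picone inequality. -/
lemma young_aux (p r : ℝ) (hp1 : 1 < p) (hr1 : 1 < r) (hrp : r ≤ p)
    (t ξ η : ℝ) (ht : 0 < t) (hξ : 0 ≤ ξ) (hη : 0 ≤ η) :
    r * t ^ (r - 1) * (ξ ^ (p - 1) * η) ≤
      (r - 1) * (t ^ r * ξ ^ p) + (p - r) / p * ξ ^ p + r / p * η ^ p := by
  have hp0 : (0:ℝ) < p := lt_trans one_pos hp1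
  have hr0 : (0:ℝ) < r := lt_trans one_pos hr1
  rcases hξ.eq_or_lt with h | hξ0
  · rw [← h, Real.zero_rpow (by linarith : p - 1 ≠ 0),
      Real.zero_rpow (by linarith : p ≠ 0)]
    have h1 : 0 ≤ r / p * η ^ p := by positivity
    nlinarith
  · -- weights
    set w₁ : ℝ := (r - 1) / r with hw₁def
    set w₂ : ℝ := (p - r) / (p * r) with hw₂def
    set w₃ : ℝ := 1 / p with hw₃def
    have hw₁ : 0 ≤ w₁ := div_nonneg (by linarith) (by positivity)
    have hw₂ : 0 ≤ w₂ := by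
      apply div_nonneg (by linarith) (by positivity)
    have hw₃ : 0 ≤ w₃ := by positivity
    have hw : w₁ + w₂ + w₃ = 1 := by
      rw [hw₁def, hw₂def, hw₃def]; field_simp; ring
    have hp₁ : (0:ℝ) ≤ t ^ r * ξ ^ p := by positivity
    have hp₂ : (0:ℝ) ≤ ξ ^ p := by positivity
    have hp₃ : (0:ℝ) ≤ η ^ p := by positivity
    have key := Real.geom_mean_le_arith_mean3_weighted hw₁ hw₂ hw₃ hp₁ hp₂ hp₃ hw
    have h1 : (t ^ r * ξ ^ p) ^ w₁ = t ^ (r - 1) * ξ ^ (p * w₁) := by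
      rw [Real.mul_rpow (by positivity) (by positivity), ← Real.rpow_mul ht.le,
        ← Real.rpow_mul hξ]
      congr 2
      rw [hw₁def]; field_simp
    have h2 : (ξ ^ p) ^ w₂ = ξ ^ (p * w₂) := (Real.rpow_mul hξ _ _).symm
    have h3 : (η ^ p) ^ w₃ = η := by
      rw [← Real.rpow_mul hη, hw₃def, mul_one_div, div_self hp0.ne', Real.rpow_one]
    have h4 : ξ ^ (p * w₁) * ξ ^ (p * w₂) = ξ ^ (p - 1) := by
      rw [← Real.rpow_add hξ0]
      congr 1
      rw [hw₁def, hw₂def]; field_simp; ring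
    have hgm : (t ^ r * ξ ^ p) ^ w₁ * (ξ ^ p) ^ w₂ * (η ^ p) ^ w₃
        = t ^ (r - 1) * (ξ ^ (p - 1) * η) := by
      rw [h1, h2, h3]
      linear_combination (t ^ (r - 1) * η) * h4
    rw [hgm] at key
    have key2 := mul_le_mul_of_nonneg_left key hr0.le
    have hrhs : r * (w₁ * (t ^ r * ξ ^ p) + w₂ * (ξ ^ p) + w₃ * (η ^ p))
        = (r - 1) * (t ^ r * ξ ^ p) + (p - r) / p * ξ ^ p + r / p * η ^ p := by
      rw [hw₁def, hw₂def, hw₃def]; field_simp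
    rw [hrhs] at key2
    calc r * t ^ (r - 1) * (ξ ^ (p - 1) * η)
        = r * (t ^ (r - 1) * (ξ ^ (p - 1) * η)) := by ring
      _ ≤ _ := key2

/-- Pointwise bound for one of the two terms in the Picone inequality. -/
lemma term_bound (p r t ξ η I : ℝ) (hp1 : 1 < p) (hr1 : 1 < r) (hrp : r ≤ p)
    (ht : 0 < t) (hξ : 0 ≤ ξ) (hη : 0 ≤ η) (hI : I ≤ ξ * η) :
    r / p * ξ ^ p - r / p * η ^ p ≤
      ξ ^ (p - 2) * ((1 + (r - 1) * t ^ r) * (ξ * ξ) - r * t ^ (r - 1) * I) := by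
  have hp0 : (0:ℝ) < p := lt_trans one_pos hp1
  have hA : 0 ≤ ξ ^ (p - 2) := Real.rpow_nonneg hξ _
  have h2 : ξ ^ (p - 2) * (ξ * ξ) = ξ ^ p := by
    rcases hξ.eq_or_lt with h | h
    · rw [← h, Real.zero_rpow hp0.ne']; ring
    · rw [show ξ * ξ = ξ ^ (2:ℝ) from by
        rw [show (2:ℝ) = ((2:ℕ):ℝ) by norm_num, Real.rpow_natCast]; ring]
      rw [← Real.rpow_add h]; congr 1; ring
  have h1 : ξ ^ (p - 2) * ξ = ξ ^ (p - 1) := by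
    rcases hξ.eq_or_lt with h | h
    · rw [← h, Real.zero_rpow (by linarith : p - 1 ≠ 0)]; ring
    · nth_rewrite 2 [show ξ = ξ ^ (1:ℝ) from (Real.rpow_one ξ).symm]
      rw [← Real.rpow_add h]; congr 1; ring
  have hD : 0 ≤ ξ ^ (p - 2) * (r * t ^ (r - 1)) := by positivity
  have hIb : ξ ^ (p - 2) * (r * t ^ (r - 1)) * I
      ≤ ξ ^ (p - 2) * (r * t ^ (r - 1)) * (ξ * η) := by
    exact mul_le_mul_of_nonneg_left hI hD
  have hprod : ξ ^ (p - 2) * (r * t ^ (r - 1)) * (ξ * η)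
      = r * t ^ (r - 1) * (ξ ^ (p - 1) * η) := by
    rw [← h1]; ring
  have Y1 := young_aux p r hp1 hr1 hrp t ξ η ht hξ hη
  have hexp : ξ ^ (p - 2) * ((1 + (r - 1) * t ^ r) * (ξ * ξ) - r * t ^ (r - 1) * I)
      = (1 + (r - 1) * t ^ r) * ξ ^ p - ξ ^ (p - 2) * (r * t ^ (r - 1)) * I := by
    rw [← h2]; ring
  rw [hexp]
  have step1 : ξ ^ (p - 2) * (r * t ^ (r - 1)) * I
      ≤ (r - 1) * (t ^ r * ξ ^ p) + (p - r) / p * ξ ^ p + r / p * η ^ p := by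
    calc ξ ^ (p - 2) * (r * t ^ (r - 1)) * I
        ≤ ξ ^ (p - 2) * (r * t ^ (r - 1)) * (ξ * η) := hIb
      _ = r * t ^ (r - 1) * (ξ ^ (p - 1) * η) := hprod
      _ ≤ _ := Y1
  have hc2 : r / p * ξ ^ p + (p - r) / p * ξ ^ p = ξ ^ p := by
    field_simp
    ring
  linarith [step1, hc2]

/-- The gradient of `(u^r - v^r)/u^{r-1}` at a point where `u, v` are positive
and differentiable. -/
lemma grad_formula {N : ℕ} (r : ℝ) (u v : Euc N → ℝ) (x : Euc N)
    (hu : DifferentiableAt ℝ u x) (hv : DifferentiableAt ℝ v x)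
    (hev : ∀ᶠ z in nhds x, 0 < u z ∧ 0 < v z) :
    gradient (fun z => (u z ^ r - v z ^ r) / u z ^ (r - 1)) x
      = (1 - v x ^ r * ((1 - r) * u x ^ (1 - r - 1))) • gradient u x
        - (u x ^ (1 - r) * (r * v x ^ (r - 1))) • gradient v x := by
  have ha : 0 < u x := hev.self_of_nhds.1
  have hb : 0 < v x := hev.self_of_nhds.2
  have hXf : HasFDerivAt u (InnerProductSpace.toDual ℝ (Euc N) (gradient u x)) x :=
    hasGradientAt_iff_hasFDerivAt.mp hu.hasGradientAt
  have hYf : HasFDerivAt v (InnerProductSpace.toDual ℝ (Euc N) (gradient v x)) x :=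
    hasGradientAt_iff_hasFDerivAt.mp hv.hasGradientAt
  have hvr : HasFDerivAt (fun z => v z ^ r)
      ((r * v x ^ (r - 1)) • InnerProductSpace.toDual ℝ (Euc N) (gradient v x)) x :=
    hYf.rpow_const (Or.inl hb.ne')
  have hu1r : HasFDerivAt (fun z => u z ^ (1 - r))
      (((1 - r) * u x ^ (1 - r - 1)) • InnerProductSpace.toDual ℝ (Euc N) (gradient u x)) x :=
    hXf.rpow_const (Or.inl ha.ne')
  have hmul := hvr.mul hu1r
  have hg := hXf.sub hmul
  have hgrad : HasGradientAt (fun z => u z - v z ^ r * u z ^ (1 - r))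
      ((1 - v x ^ r * ((1 - r) * u x ^ (1 - r - 1))) • gradient u x
        - (u x ^ (1 - r) * (r * v x ^ (r - 1))) • gradient v x) x := by
    rw [hasGradientAt_iff_hasFDerivAt]
    have heq : InnerProductSpace.toDual ℝ (Euc N)
        ((1 - v x ^ r * ((1 - r) * u x ^ (1 - r - 1))) • gradient u x
          - (u x ^ (1 - r) * (r * v x ^ (r - 1))) • gradient v x)
        = InnerProductSpace.toDual ℝ (Euc N) (gradient u x) -
          (v x ^ r • ((1 - r) * u x ^ (1 - r - 1)) •
              InnerProductSpace.toDual ℝ (Euc N) (gradient u x) +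
            u x ^ (1 - r) • (r * v x ^ (r - 1)) •
              InnerProductSpace.toDual ℝ (Euc N) (gradient v x)) := by
      simp only [map_sub, _root_.map_smul, smul_smul]
      module
    rw [heq]
    exact hg
  have hfg : (fun z => (u z ^ r - v z ^ r) / u z ^ (r - 1))
      =ᶠ[nhds x] fun z => u z - v z ^ r * u z ^ (1 - r) := by
    filter_upwards [hev] with z hz
    have hz1 : 0 < u z := hz.1
    rw [sub_div, ← Real.rpow_sub hz1, show r - (r - 1) = 1 by ring, Real.rpow_one,
      div_eq_mul_inv, ← Real.rpow_neg hz1.le, show -(r - 1) = 1 - r by ring]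
  exact ((hgrad.congr_of_eventuallyEq hfg)).gradient

/-- Local Picone-type inequality (Lemma `Lemma3` of the paper): for `1 < p < ∞`,
`1 < r ≤ p` and any two positive differentiable functions `u, v` on an open set
`Ω ⊆ ℝ^N`, the pointwise inequality
`[∇u]^{p-1} · ∇((u^r - v^r)/u^{r-1}) + [∇v]^{p-1} · ∇((v^r - u^r)/v^{r-1}) ≥ 0`
holds for all `x ∈ Ω`. -/
theorem local_picone {N : ℕ} (Ω : Set (Euc N)) (hΩ : IsOpen Ω)
    (p r : ℝ) (hp1 : 1 < p) (hr1 : 1 < r) (hrp : r ≤ p)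
    (u v : Euc N → ℝ)
    (hu : ∀ x ∈ Ω, DifferentiableAt ℝ u x) (hv : ∀ x ∈ Ω, DifferentiableAt ℝ v x)
    (hupos : ∀ x ∈ Ω, 0 < u x) (hvpos : ∀ x ∈ Ω, 0 < v x) :
    ∀ x ∈ Ω,
      0 ≤ ⟪vecPow p (gradient u x),
            gradient (fun z => (u z ^ r - v z ^ r) / u z ^ (r - 1)) x⟫ +
          ⟪vecPow p (gradient v x),
            gradient (fun z => (v z ^ r - u z ^ r) / v z ^ (r - 1)) x⟫ := by
  intro x hx
  have ha : 0 < u x := hupos x hx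
  have hb : 0 < v x := hvpos x hx
  have hevu : ∀ᶠ z in nhds x, 0 < u z :=
    (hu x hx).continuousAt.eventually (eventually_gt_nhds ha)
  have hevv : ∀ᶠ z in nhds x, 0 < v z :=
    (hv x hx).continuousAt.eventually (eventually_gt_nhds hb)
  have hev : ∀ᶠ z in nhds x, 0 < u z ∧ 0 < v z := hevu.and hevv
  have hev' : ∀ᶠ z in nhds x, 0 < v z ∧ 0 < u z := hevv.and hevu
  have h1 := grad_formula r u v x (hu x hx) (hv x hx) hev
  have h2 := grad_formula r v u x (hv x hx) (hu x hx) hev'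
  rw [h1, h2]
  set X := gradient u x
  set Y := gradient v x
  set ξ := ‖X‖ with hξdef
  set η := ‖Y‖ with hηdef
  have hξ : 0 ≤ ξ := norm_nonneg _
  have hη : 0 ≤ η := norm_nonneg _
  have hIb : ⟪X, Y⟫ ≤ ξ * η := real_inner_le_norm X Y
  have expand1 : ⟪vecPow p X, (1 - v x ^ r * ((1 - r) * u x ^ (1 - r - 1))) • X
      - (u x ^ (1 - r) * (r * v x ^ (r - 1))) • Y⟫
      = ξ ^ (p - 2) * ((1 - v x ^ r * ((1 - r) * u x ^ (1 - r - 1))) * (ξ * ξ)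
        - (u x ^ (1 - r) * (r * v x ^ (r - 1))) * ⟪X, Y⟫) := by
    simp only [vecPow, inner_sub_right, real_inner_smul_left, real_inner_smul_right,
      real_inner_self_eq_norm_mul_norm, ← hξdef]
    ring
  have expand2 : ⟪vecPow p Y, (1 - u x ^ r * ((1 - r) * v x ^ (1 - r - 1))) • Y
      - (v x ^ (1 - r) * (r * u x ^ (r - 1))) • X⟫
      = η ^ (p - 2) * ((1 - u x ^ r * ((1 - r) * v x ^ (1 - r - 1))) * (η * η)
        - (v x ^ (1 - r) * (r * u x ^ (r - 1))) * ⟪X, Y⟫) := by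
    simp only [vecPow, inner_sub_right, real_inner_smul_left, real_inner_smul_right,
      real_inner_self_eq_norm_mul_norm, real_inner_comm Y X, ← hηdef]
    ring
  rw [expand1, expand2]
  -- rewrite the coefficients in terms of t = v x / u x
  set t : ℝ := v x / u x with htdef
  have ht : 0 < t := div_pos hb ha
  have har : (0:ℝ) < u x ^ r := Real.rpow_pos_of_pos ha _
  have hbr : (0:ℝ) < v x ^ r := Real.rpow_pos_of_pos hb _
  have har1 : (0:ℝ) < u x ^ (r - 1) := Real.rpow_pos_of_pos ha _
  have hbr1 : (0:ℝ) < v x ^ (r - 1) := Real.rpow_pos_of_pos hb _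
  have htr : t ^ r = v x ^ r / u x ^ r := Real.div_rpow hb.le ha.le _
  have htr1 : t ^ (r - 1) = v x ^ (r - 1) / u x ^ (r - 1) := Real.div_rpow hb.le ha.le _
  have htinv : t⁻¹ = u x / v x := by rw [htdef, inv_div]
  have htinvr : t⁻¹ ^ r = u x ^ r / v x ^ r := by rw [htinv]; exact Real.div_rpow ha.le hb.le _
  have htinvr1 : t⁻¹ ^ (r - 1) = u x ^ (r - 1) / v x ^ (r - 1) := by
    rw [htinv]; exact Real.div_rpow ha.le hb.le _
  have ec1 : 1 - v x ^ r * ((1 - r) * u x ^ (1 - r - 1)) = 1 + (r - 1) * t ^ r := by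
    rw [htr, show (1 - r - 1 : ℝ) = -r by ring, Real.rpow_neg ha.le]
    field_simp
    try ring
  have ec2 : u x ^ (1 - r) * (r * v x ^ (r - 1)) = r * t ^ (r - 1) := by
    rw [htr1, show (1 - r : ℝ) = -(r - 1) by ring, Real.rpow_neg ha.le]
    field_simp
    try ring
  have ed1 : 1 - u x ^ r * ((1 - r) * v x ^ (1 - r - 1)) = 1 + (r - 1) * t⁻¹ ^ r := by
    rw [htinvr, show (1 - r - 1 : ℝ) = -r by ring, Real.rpow_neg hb.le]
    field_simp
    try ring
  have ed2 : v x ^ (1 - r) * (r * u x ^ (r - 1)) = r * t⁻¹ ^ (r - 1) := by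
    rw [htinvr1, show (1 - r : ℝ) = -(r - 1) by ring, Real.rpow_neg hb.le]
    field_simp
    try ring
  rw [ec1, ec2, ed1, ed2]
  have T1 := term_bound p r t ξ η ⟪X, Y⟫ hp1 hr1 hrp ht hξ hη hIb
  have T2 := term_bound p r t⁻¹ η ξ ⟪X, Y⟫ hp1 hr1 hrp (inv_pos.mpr ht) hη hξ
    (by rw [mul_comm]; exact hIb)
  linarith
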